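/- For the exponential family presentation of the gamma distributions with natural parameters (ν, κ), the Fisher information metric in the κ-coordinate direction equals ψ′(κ) − 1/κ, where ψ′ is the trigamma function; moreover ψ′(κ) − 1/κ > 0 for all κ > 0, so the integrand in the geodesic arclength formula √(ψ′(κ) − 1/κ) is well defined. -/

import Mathlib

open Real Filter Topology

noncomputable def Afun (n : ℕ) (x : ℝ) : ℝ :=
  x * (Real.log ((n:ℝ)+2) - Real.log ((n:ℝ)+1)) + Real.log ((n:ℝ)+1) - Real.log (x + ((n:ℝ)+1))

noncomputable def Bfun (n : ℕ) (x : ℝ) : ℝ :=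
  (Real.log ((n:ℝ)+2) - Real.log ((n:ℝ)+1)) - (x + ((n:ℝ)+1))⁻¹

noncomputable def Cfun (n : ℕ) (x : ℝ) : ℝ := ((x + ((n:ℝ)+1))^2)⁻¹

lemma log_diff_le {m x : ℝ} (hm : 0 < m) (hx : 0 ≤ x) :
    Real.log (m+x) - Real.log m ≤ x/m := by
  have h1 : Real.log ((m+x) / m) ≤ (m+x)/m - 1 := Real.log_le_sub_one_of_pos (by positivity)
  rw [Real.log_div (by positivity) hm.ne'] at h1
  have : (m+x)/m - 1 = x/m := by field_simp; ring
  linarith [this ▸ h1]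

lemma le_log_diff {m x : ℝ} (hm : 0 < m) (hx : 0 ≤ x) :
    x/(m+x) ≤ Real.log (m+x) - Real.log m := by
  have h1 : Real.log (m / (m+x)) ≤ m/(m+x) - 1 := Real.log_le_sub_one_of_pos (by positivity)
  rw [Real.log_div hm.ne' (by positivity)] at h1
  have : m/(m+x) - 1 = -(x/(m+x)) := by field_simp; ring
  linarith [this ▸ h1]

lemma Afun_abs_le {n : ℕ} {x : ℝ} (hx : 0 < x) :
    |Afun n x| ≤ (x^2+x) * (((n:ℝ)+1)^2)⁻¹ := by
  set m : ℝ := (n:ℝ)+1 with hm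
  have hm0 : 0 < m := by positivity
  have hL1 : Real.log (m+1) - Real.log m ≤ 1/m := log_diff_le hm0 zero_le_one
  have hL2 : (1:ℝ)/(m+1) ≤ Real.log (m+1) - Real.log m := le_log_diff hm0 zero_le_one
  have hK1 : Real.log (m+x) - Real.log m ≤ x/m := log_diff_le hm0 hx.le
  have hK2 : x/(m+x) ≤ Real.log (m+x) - Real.log m := le_log_diff hm0 hx.le
  have hA : Afun n x = x * (Real.log (m+1) - Real.log m) - (Real.log (m+x) - Real.log m) := by
    simp only [Afun, ← hm]
    rw [show (n:ℝ)+2 = m+1 by rw [hm]; ring, show x + m = m+x by ring]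
    ring
  rw [hA, abs_le]
  constructor
  · have h1 : x * (1/(m+1)) ≤ x * (Real.log (m+1) - Real.log m) :=
      mul_le_mul_of_nonneg_left hL2 hx.le
    have h2 : x/m - x/(m+1) = x/(m*(m+1)) := by field_simp; ring
    have h3 : x/(m*(m+1)) ≤ x/m^2 := by
      apply div_le_div_of_nonneg_left hx.le (by positivity); nlinarith
    have : x/m^2 ≤ (x^2+x) * (m^2)⁻¹ := by
      rw [div_eq_mul_inv]; apply mul_le_mul_of_nonneg_right (by nlinarith) (by positivity)
    rw [mul_one_div] at h1
    linarith
  · have h1 : x * (Real.log (m+1) - Real.log m) ≤ x * (1/m) :=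
      mul_le_mul_of_nonneg_left hL1 hx.le
    have h2 : x/m - x/(m+x) = x^2/(m*(m+x)) := by field_simp; ring
    have h3 : x^2/(m*(m+x)) ≤ x^2/m^2 := by
      apply div_le_div_of_nonneg_left (by positivity) (by positivity); nlinarith
    have h4 : x^2/m^2 ≤ (x^2+x) * (m^2)⁻¹ := by
      rw [div_eq_mul_inv]; apply mul_le_mul_of_nonneg_right (by nlinarith) (by positivity)
    have h5 := h2 ▸ h3
    rw [mul_one_div] at h1
    linarith

lemma Bfun_abs_le {n : ℕ} {x c : ℝ} (hx : 0 < x) (hc : x ≤ c) :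
    |Bfun n x| ≤ (c+1) * (((n:ℝ)+1)^2)⁻¹ := by
  set m : ℝ := (n:ℝ)+1 with hm
  have hm0 : 0 < m := by positivity
  have hm1 : 1 ≤ m := by simp [hm]
  have hc0 : 0 < c := lt_of_lt_of_le hx hc
  have hL1 : Real.log (m+1) - Real.log m ≤ 1/m := log_diff_le hm0 zero_le_one
  have hL2 : (1:ℝ)/(m+1) ≤ Real.log (m+1) - Real.log m := le_log_diff hm0 zero_le_one
  have hB : Bfun n x = (Real.log (m+1) - Real.log m) - (x+m)⁻¹ := by
    simp only [Bfun, ← hm]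
    rw [show (n:ℝ)+2 = m+1 by rw [hm]; ring]
  have hi1 : (x+m)⁻¹ ≤ 1/m := by
    rw [one_div]; exact inv_anti₀ hm0 (by linarith)
  have hi2 : 1/(c+m) ≤ (x+m)⁻¹ := by
    rw [one_div]; exact inv_anti₀ (by positivity) (by linarith)
  rw [hB, abs_le]
  constructor
  · -- lower:  ≥ 1/(m+1) - 1/m = -1/(m(m+1)) ≥ -1/m² ≥ -(c+1)/m²
    have h2 : (1:ℝ)/m - 1/(m+1) = 1/(m*(m+1)) := by field_simp; ring
    have h3 : (1:ℝ)/(m*(m+1)) ≤ 1/m^2 := by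
      apply div_le_div_of_nonneg_left zero_le_one (by positivity); nlinarith
    have h4 : (1:ℝ)/m^2 ≤ (c+1) * (m^2)⁻¹ := by
      rw [one_div]
      nlinarith [inv_pos.mpr (show (0:ℝ) < m^2 by positivity)]
    linarith
  · -- upper: ≤ 1/m - 1/(c+m) = c/(m(c+m)) ≤ c/m² ≤ (c+1)/m²
    have h2 : (1:ℝ)/m - 1/(c+m) = c/(m*(c+m)) := by
      field_simp
      ring
    have h3 : c/(m*(c+m)) ≤ c/m^2 := by
      apply div_le_div_of_nonneg_left hc0.le (by positivity); nlinarith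
    have h4 : c/m^2 ≤ (c+1) * (m^2)⁻¹ := by
      rw [div_eq_mul_inv]; apply mul_le_mul_of_nonneg_right (by linarith) (by positivity)
    linarith

lemma Cfun_abs_le {n : ℕ} {x : ℝ} (hx : 0 < x) :
    |Cfun n x| ≤ (((n:ℝ)+1)^2)⁻¹ := by
  have hm0 : (0:ℝ) < (n:ℝ)+1 := by positivity
  have h1 : (0:ℝ) < (x + ((n:ℝ)+1))^2 := by positivity
  rw [Cfun, abs_of_pos (inv_pos.mpr h1)]
  apply inv_anti₀ (by positivity)
  nlinarith

lemma summable_sq : Summable (fun n : ℕ => (((n:ℝ)+1)^2)⁻¹) := by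
  have h := (Real.summable_one_div_nat_pow (p := 2)).mpr (by norm_num)
  have h2 := (summable_nat_add_iff 1).mpr h
  refine h2.congr fun n => ?_
  push_cast
  rw [one_div]

lemma hasDerivAt_Afun {n : ℕ} {x : ℝ} (hx : 0 < x) :
    HasDerivAt (Afun n) (Bfun n x) x := by
  have hne : x + ((n:ℝ)+1) ≠ 0 := by positivity
  have h1 : HasDerivAt (fun y : ℝ => y + ((n:ℝ)+1)) 1 x := (hasDerivAt_id x).add_const _
  have h2 : HasDerivAt (fun y : ℝ => Real.log (y + ((n:ℝ)+1)))
      ((x + ((n:ℝ)+1))⁻¹) x := by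
    simpa using h1.log hne
  have h3 : HasDerivAt (fun y : ℝ =>
      y * (Real.log ((n:ℝ)+2) - Real.log ((n:ℝ)+1)) + Real.log ((n:ℝ)+1))
      (Real.log ((n:ℝ)+2) - Real.log ((n:ℝ)+1)) x := by
    simpa using ((hasDerivAt_id x).mul_const (Real.log ((n:ℝ)+2) - Real.log ((n:ℝ)+1))).add_const
      (Real.log ((n:ℝ)+1))
  exact h3.sub h2

lemma hasDerivAt_Bfun {n : ℕ} {x : ℝ} (hx : 0 < x) :
    HasDerivAt (Bfun n) (Cfun n x) x := by
  have hne : x + ((n:ℝ)+1) ≠ 0 := by positivity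
  have h1 : HasDerivAt (fun y : ℝ => y + ((n:ℝ)+1)) 1 x := (hasDerivAt_id x).add_const _
  have h2 := h1.inv hne
  have h3 := (hasDerivAt_const x (Real.log ((n:ℝ)+2) - Real.log ((n:ℝ)+1))).sub h2
  convert h3 using 1
  · rfl
  · rfl
  · rfl
  rw [Cfun]
  field_simp
  ring

lemma partial_sum (x : ℝ) (N : ℕ) :
    ∑ n ∈ Finset.range N, Afun n x =
      Real.BohrMollerup.logGammaSeq x N + Real.log x
        + x * (Real.log ((N:ℝ)+1) - Real.log (N:ℝ)) := by
  induction N with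
  | zero => simp [Real.BohrMollerup.logGammaSeq, Afun]
  | succ N ih =>
    rw [Finset.sum_range_succ, ih]
    have hfac : Real.log (Nat.factorial (N+1) : ℝ) = Real.log ((N:ℝ)+1) + Real.log (Nat.factorial N : ℝ) := by
      push_cast [Nat.factorial_succ]
      rw [Real.log_mul (by positivity) (by exact_mod_cast (Nat.factorial_pos N).ne')]
    simp only [Real.BohrMollerup.logGammaSeq, Afun]
    rw [show N+1+1 = (N+1)+1 from rfl, Finset.sum_range_succ (fun m => Real.log (x + m)) (N+1),
      hfac]
    push_cast
    rw [show ((N:ℝ)+1+1) = (N:ℝ)+2 by ring]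
    ring

lemma tendsto_tail : Tendsto (fun N : ℕ => Real.log ((N:ℝ)+1) - Real.log (N:ℝ)) atTop (𝓝 0) := by
  have l1 : Tendsto (fun N : ℕ => 1 + 1/(N:ℝ)) atTop (𝓝 1) := by
    simpa using (tendsto_const_nhds (x := (1:ℝ))).add tendsto_one_div_atTop_nhds_zero_nat
  have l2 : Tendsto (fun N : ℕ => Real.log (1 + 1/(N:ℝ))) atTop (𝓝 0) := by
    have := (Real.continuousAt_log one_ne_zero).tendsto.comp l1
    simpa [Function.comp_def] using this
  refine l2.congr' ?_
  filter_upwards [eventually_gt_atTop 0] with N hN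
  have hN' : (0:ℝ) < N := by exact_mod_cast hN
  rw [show (1:ℝ) + 1/(N:ℝ) = ((N:ℝ)+1)/N by field_simp, Real.log_div (by positivity) hN'.ne']

lemma summable_Afun {x : ℝ} (hx : 0 < x) : Summable fun n => Afun n x := by
  refine Summable.of_norm_bounded (summable_sq.mul_left (x^2+x)) fun n => ?_
  rw [Real.norm_eq_abs]
  exact Afun_abs_le hx

lemma hasSum_Afun {x : ℝ} (hx : 0 < x) :
    HasSum (fun n => Afun n x) (Real.log (Real.Gamma x) + Real.log x) := by
  have h1 := (summable_Afun hx).hasSum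
  have h3 : Tendsto (fun N => ∑ n ∈ Finset.range N, Afun n x) atTop
      (𝓝 (Real.log (Real.Gamma x) + Real.log x)) := by
    have hg := Real.BohrMollerup.tendsto_log_gamma hx
    have htail : Tendsto (fun N : ℕ => x * (Real.log ((N:ℝ)+1) - Real.log (N:ℝ)))
        atTop (𝓝 0) := by simpa using tendsto_tail.const_mul x
    have := (hg.add (tendsto_const_nhds (x := Real.log x))).add htail
    simp only [add_zero] at this
    refine this.congr fun N => ?_
    rw [partial_sum]
  rwa [tendsto_nhds_unique h1.tendsto_sum_nat h3] at h1

theorem trigamma_gt_inv (κ : ℝ) (hκ : 0 < κ) :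
    iteratedDeriv 2 (fun x : ℝ => Real.log (Real.Gamma x)) κ > 1 / κ := by
  set t : Set ℝ := Set.Ioo 0 (κ+1) with ht
  have htO : IsOpen t := isOpen_Ioo
  have htP : IsPreconnected t := isPreconnected_Ioo
  have hκt : κ ∈ t := ⟨hκ, by linarith⟩
  have hsumBκ : Summable fun n => Bfun n κ := by
    refine Summable.of_norm_bounded (summable_sq.mul_left (κ+1+1)) fun n => ?_
    rw [Real.norm_eq_abs]
    exact Bfun_abs_le hκ (by linarith)
  have hG : ∀ y ∈ t, HasDerivAt (fun z => ∑' n, Afun n z) (∑' n, Bfun n y) y := by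
    intro y hy
    refine hasDerivAt_tsum_of_isPreconnected (summable_sq.mul_left (κ+1+1)) htO htP
      (fun n z hz => hasDerivAt_Afun hz.1) (fun n z hz => ?_) hκt (summable_Afun hκ) hy
    rw [Real.norm_eq_abs]
    exact Bfun_abs_le hz.1 hz.2.le
  have hG' : ∀ y ∈ t, HasDerivAt (fun z => ∑' n, Bfun n z) (∑' n, Cfun n y) y := by
    intro y hy
    refine hasDerivAt_tsum_of_isPreconnected summable_sq htO htP
      (fun n z hz => hasDerivAt_Bfun hz.1)
      (fun n z hz => by rw [Real.norm_eq_abs]; exact Cfun_abs_le hz.1) hκt hsumBκ hy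
  set f : ℝ → ℝ := fun x => Real.log (Real.Gamma x) with hf
  have heq : Set.EqOn f (fun z => (∑' n, Afun n z) - Real.log z) t := by
    intro z hz
    have h := (hasSum_Afun hz.1).tsum_eq
    simp only [hf, h]
    ring
  have hf' : ∀ y ∈ t, HasDerivAt f ((∑' n, Bfun n y) - y⁻¹) y := by
    intro y hy
    have h := (hG y hy).sub (Real.hasDerivAt_log (ne_of_gt hy.1))
    exact h.congr_of_eventuallyEq (Filter.eventuallyEq_of_mem (htO.mem_nhds hy) heq)
  have hderiv_eq : Set.EqOn (deriv f) (fun y => (∑' n, Bfun n y) - y⁻¹) t :=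
    fun y hy => (hf' y hy).deriv
  have h2 : HasDerivAt (fun y : ℝ => (∑' n, Bfun n y) - y⁻¹)
      ((∑' n, Cfun n κ) - -(κ^2)⁻¹) κ :=
    (hG' κ hκt).sub (hasDerivAt_inv hκ.ne')
  have h2' : HasDerivAt (deriv f) ((∑' n, Cfun n κ) + (κ^2)⁻¹) κ := by
    have h := h2.congr_of_eventuallyEq (Filter.eventuallyEq_of_mem (htO.mem_nhds hκt) hderiv_eq)
    simpa [sub_neg_eq_add] using h
  have key : iteratedDeriv 2 f κ = (∑' n, Cfun n κ) + (κ^2)⁻¹ := by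
    rw [show (2:ℕ) = 1+1 from rfl, iteratedDeriv_succ, iteratedDeriv_one]
    exact h2'.deriv
  -- compare with telescoping sum
  have hsumC : Summable fun n => Cfun n κ := by
    refine Summable.of_norm_bounded summable_sq fun n => ?_
    rw [Real.norm_eq_abs]; exact Cfun_abs_le hκ
  have htel : HasSum (fun n : ℕ => (κ+(n:ℝ)+1)⁻¹ - (κ+(n:ℝ)+2)⁻¹) (κ+1)⁻¹ := by
    rw [hasSum_iff_tendsto_nat_of_nonneg]
    · have hps : ∀ N : ℕ, ∑ n ∈ Finset.range N, ((κ+(n:ℝ)+1)⁻¹ - (κ+(n:ℝ)+2)⁻¹)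
          = (κ+1)⁻¹ - (κ+(N:ℝ)+1)⁻¹ := by
        intro N
        induction N with
        | zero => simp
        | succ N ih =>
          rw [Finset.sum_range_succ, ih]
          push_cast
          ring
      have hz : Tendsto (fun N : ℕ => (κ+(N:ℝ)+1)⁻¹) atTop (𝓝 0) := by
        apply tendsto_inv_atTop_zero.comp
        apply tendsto_atTop_add_const_right
        apply tendsto_atTop_add_const_left
        exact tendsto_natCast_atTop_atTop
      have := (tendsto_const_nhds : Tendsto (fun _ : ℕ => (κ+1)⁻¹) atTop (𝓝 ((κ+1)⁻¹))).sub hz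
      simp only [sub_zero] at this
      exact this.congr fun N => (hps N).symm
    · intro n
      have h1 : (0:ℝ) < κ+(n:ℝ)+1 := by positivity
      have := inv_anti₀ h1 (show κ+(n:ℝ)+1 ≤ κ+(n:ℝ)+2 by linarith)
      linarith
  have hle : (κ+1)⁻¹ ≤ ∑' n, Cfun n κ := by
    rw [← htel.tsum_eq]
    refine Summable.tsum_le_tsum (fun n => ?_) htel.summable hsumC
    have h1 : (0:ℝ) < κ+(n:ℝ)+1 := by positivity
    have e : (κ+(n:ℝ)+1)⁻¹ - (κ+(n:ℝ)+2)⁻¹ = ((κ+(n:ℝ)+1)*((κ+(n:ℝ)+1)+1))⁻¹ := by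
      rw [show κ+(n:ℝ)+2 = (κ+(n:ℝ)+1)+1 by ring]
      field_simp
      ring
    rw [e, Cfun, show κ + ((n:ℝ)+1) = κ+(n:ℝ)+1 by ring]
    apply inv_anti₀ (by positivity)
    nlinarith
  have hlt : 1/κ < (κ^2)⁻¹ + (κ+1)⁻¹ := by
    have e : 1/κ - (κ+1)⁻¹ = (κ*(κ+1))⁻¹ := by field_simp; ring
    have h : (κ*(κ+1))⁻¹ < (κ^2)⁻¹ := by
      apply inv_strictAnti₀ (by positivity)
      nlinarith
    linarith
  rw [hf] at key   -- f is the same lambda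
  rw [key]
  linarith
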